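/- Let V be a finite-dimensional real inner product space with dim V ≥ 2, let W be a nonzero proper linear subspace of V, and let x̄, ȳ ∈ P(V) with x̄, ȳ ∉ P(W^⊥). Then d(P_W x̄, P_W ȳ) ≤ d(x̄, P(W^⊥))^{-1} · d(ȳ, P(W^⊥))^{-1} · d(x̄, ȳ). -/

import Mathlib

open scoped RealInnerProductSpace
open Filter

variable {V : Type*} [NormedAddCommGroup V] [InnerProductSpace ℝ V]

/-- The projective distance between the lines spanned by two nonzero vectors:
`d(x̄, ȳ) = (1 − ⟨x,y⟫²/(|x|²|y|²))^{1/2}`. -/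
noncomputable def projDist (x y : V) : ℝ :=
  Real.sqrt (1 - ⟪x, y⟫ ^ 2 / (‖x‖ ^ 2 * ‖y‖ ^ 2))

/-- The distance `d(x̄, P(W))` from the line spanned by `x` to the projective space of the
submodule `W`. -/
noncomputable def projDistToSub (x : V) (W : Submodule ℝ V) : ℝ :=
  sInf {r : ℝ | ∃ y : V, y ∈ W ∧ y ≠ 0 ∧ r = projDist x y}

/-- `κ(E₀,…,E_s)`: the minimal projective distance between nonzero vectors lying in sums of
disjoint subfamilies of the `E i`. -/
noncomputable def kappa {ι : Type*} (E : ι → Submodule ℝ V) : ℝ :=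
  sInf {r : ℝ | ∃ (I J : Finset ι) (x y : V), I.Nonempty ∧ J.Nonempty ∧ Disjoint I J ∧
    x ∈ (⨆ i ∈ I, E i) ∧ x ≠ 0 ∧ y ∈ (⨆ j ∈ J, E j) ∧ y ≠ 0 ∧ r = projDist x y}

/-- `Vⁱ = E_{i+1} ⊕ ⋯ ⊕ E_s`. -/
noncomputable def Vlow {s : ℕ} (E : Fin (s+1) → Submodule ℝ V) (i : ℕ) : Submodule ℝ V :=
  ⨆ j : Fin (s+1), ⨆ _ : i < (j : ℕ), E j

/-- `Wⁱ = E₀ ⊕ ⋯ ⊕ E_i`. -/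
noncomputable def Whigh {s : ℕ} (E : Fin (s+1) → Submodule ℝ V) (i : ℕ) : Submodule ℝ V :=
  ⨆ j : Fin (s+1), ⨆ _ : (j : ℕ) ≤ i, E j

/-- `‖x ∧ y‖ = (|x|²|y|² − ⟨x,y⟫²)^{1/2}`, the area of the parallelogram spanned by `x, y`. -/
noncomputable def wedgeNorm (x y : V) : ℝ :=
  Real.sqrt (‖x‖ ^ 2 * ‖y‖ ^ 2 - ⟪x, y⟫ ^ 2)

/-- Lemma 2.6 of the paper. For a nonzero proper subspace `W` of `V` and
nonzero `x, y ∉ W^⊥`,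
`d(P_W x̄, P_W ȳ) ≤ d(x̄, P(W^⊥))⁻¹ · d(ȳ, P(W^⊥))⁻¹ · d(x̄, ȳ)`. -/
lemma inner_sq_le (x y : V) : ⟪x, y⟫ ^ 2 ≤ ‖x‖ ^ 2 * ‖y‖ ^ 2 := by
  have := real_inner_mul_inner_self_le x y
  rw [real_inner_self_eq_norm_sq, real_inner_self_eq_norm_sq] at this
  nlinarith [this]

lemma projDist_eq (x y : V) (hx : x ≠ 0) (hy : y ≠ 0) :
    projDist x y = wedgeNorm x y / (‖x‖ * ‖y‖) := by
  have hx' : (0:ℝ) < ‖x‖ := norm_pos_iff.mpr hx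
  have hy' : (0:ℝ) < ‖y‖ := norm_pos_iff.mpr hy
  have hN : (0:ℝ) < ‖x‖ ^ 2 * ‖y‖ ^ 2 := by positivity
  unfold projDist wedgeNorm
  rw [show (1 : ℝ) - ⟪x, y⟫ ^ 2 / (‖x‖ ^ 2 * ‖y‖ ^ 2)
      = (‖x‖ ^ 2 * ‖y‖ ^ 2 - ⟪x, y⟫ ^ 2) / (‖x‖ ^ 2 * ‖y‖ ^ 2) by field_simp]
  rw [Real.sqrt_div (by nlinarith [inner_sq_le x y])]
  congr 1
  rw [show ‖x‖ ^ 2 * ‖y‖ ^ 2 = (‖x‖ * ‖y‖) ^ 2 by ring]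
  exact Real.sqrt_sq (by positivity)

lemma wedge_mono (a a' b b' : V) (hab' : ⟪a, b'⟫ = 0) (ha'b : ⟪a', b⟫ = 0)
    (haa' : ⟪a, a'⟫ = 0) (hbb' : ⟪b, b'⟫ = 0) :
    wedgeNorm a b ≤ wedgeNorm (a + a') (b + b') := by
  apply Real.sqrt_le_sqrt
  have h1 : ‖a + a'‖ ^ 2 = ‖a‖ ^ 2 + ‖a'‖ ^ 2 := by
    rw [norm_add_sq_real, haa']; ring
  have h2 : ‖b + b'‖ ^ 2 = ‖b‖ ^ 2 + ‖b'‖ ^ 2 := by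
    rw [norm_add_sq_real, hbb']; ring
  have h3 : ⟪a + a', b + b'⟫ = ⟪a, b⟫ + ⟪a', b'⟫ := by
    rw [inner_add_left, inner_add_right, inner_add_right, hab', ha'b]; ring
  rw [h1, h2, h3]
  have cs1 : ⟪a', b'⟫ ^ 2 ≤ ‖a'‖ ^ 2 * ‖b'‖ ^ 2 := inner_sq_le a' b'
  have cs2 : |⟪a, b⟫| ≤ ‖a‖ * ‖b‖ := abs_real_inner_le_norm a b
  have cs3 : |⟪a', b'⟫| ≤ ‖a'‖ * ‖b'‖ := abs_real_inner_le_norm a' b'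
  have h4 : ⟪a, b⟫ * ⟪a', b'⟫ ≤ (‖a‖ * ‖b‖) * (‖a'‖ * ‖b'‖) := by
    calc ⟪a, b⟫ * ⟪a', b'⟫ ≤ |⟪a, b⟫ * ⟪a', b'⟫| := le_abs_self _
    _ = |⟪a, b⟫| * |⟪a', b'⟫| := abs_mul _ _
    _ ≤ (‖a‖ * ‖b‖) * (‖a'‖ * ‖b'‖) :=
        mul_le_mul cs2 cs3 (abs_nonneg _) (by positivity)
  nlinarith [sq_nonneg (‖a‖ * ‖b'‖ - ‖a'‖ * ‖b‖)]
lemma projDistToSub_eq [FiniteDimensional ℝ V] (W : Submodule ℝ V) (hWt : W ≠ ⊤)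
    (x : V) (hx : x ≠ 0) :
    projDistToSub x Wᗮ = ‖(W.orthogonalProjectionOnto x : V)‖ / ‖x‖ := by
  set a : V := (W.orthogonalProjectionOnto x : V) with ha
  have haW : a ∈ W := (W.orthogonalProjectionOnto x).2
  set a' : V := x - a with ha'
  have ha'mem : a' ∈ Wᗮ := Submodule.sub_starProjection_mem_orthogonal (K := W) x
  have hxa : x = a + a' := by simp [ha']
  have hinner : ⟪a, a'⟫ = 0 := Submodule.inner_right_of_mem_orthogonal haW ha'mem
  have hx' : (0:ℝ) < ‖x‖ := norm_pos_iff.mpr hx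
  have hnormsq : ‖x‖ ^ 2 = ‖a‖ ^ 2 + ‖a'‖ ^ 2 := by
    rw [hxa, norm_add_sq_real, hinner]; ring
  have key : ∀ y, y ∈ Wᗮ → y ≠ 0 → ‖a‖ / ‖x‖ ≤ projDist x y := by
    intro y hyW hy0
    have hy' : (0:ℝ) < ‖y‖ := norm_pos_iff.mpr hy0
    have hay : ⟪a, y⟫ = 0 := Submodule.inner_right_of_mem_orthogonal haW hyW
    have hxy : ⟪x, y⟫ = ⟪a', y⟫ := by
      rw [hxa, inner_add_left, hay, zero_add]
    have h1 : ⟪a', y⟫ ^ 2 ≤ ‖a'‖ ^ 2 * ‖y‖ ^ 2 := inner_sq_le _ _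
    rw [show ‖a‖ / ‖x‖ = Real.sqrt ((‖a‖ / ‖x‖) ^ 2) from
      (Real.sqrt_sq (by positivity)).symm]
    apply Real.sqrt_le_sqrt
    have h2 : ⟪a', y⟫ ^ 2 / (‖x‖ ^ 2 * ‖y‖ ^ 2) ≤ ‖a'‖ ^ 2 / ‖x‖ ^ 2 := by
      rw [div_le_div_iff₀ (by positivity) (by positivity)]
      nlinarith
    have h3 : (‖a‖ / ‖x‖) ^ 2 = 1 - ‖a'‖ ^ 2 / ‖x‖ ^ 2 := by
      field_simp
      linarith
    rw [hxy]
    linarith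
  have mem : ‖a‖ / ‖x‖ ∈ {r : ℝ | ∃ y : V, y ∈ Wᗮ ∧ y ≠ 0 ∧ r = projDist x y} := by
    by_cases h0 : a' = 0
    · have hWb : Wᗮ ≠ ⊥ := by
        rw [Ne, Submodule.orthogonal_eq_bot_iff]; exact hWt
      obtain ⟨y, hyW, hy0⟩ := Submodule.exists_mem_ne_zero_of_ne_bot hWb
      refine ⟨y, hyW, hy0, ?_⟩
      have hax : a = x := by rw [hxa, h0, add_zero]
      have hay : ⟪x, y⟫ = 0 := by
        rw [← hax]; exact Submodule.inner_right_of_mem_orthogonal haW hyW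
      rw [hax, div_self (ne_of_gt hx')]
      unfold projDist
      rw [hay]
      simp
    · refine ⟨a', ha'mem, h0, ?_⟩
      have ha'' : (0:ℝ) < ‖a'‖ := norm_pos_iff.mpr h0
      have hxy : ⟪x, a'⟫ = ‖a'‖ ^ 2 := by
        rw [hxa, inner_add_left, hinner, real_inner_self_eq_norm_sq, zero_add]
      unfold projDist
      rw [hxy, show (1:ℝ) - (‖a'‖ ^ 2) ^ 2 / (‖x‖ ^ 2 * ‖a'‖ ^ 2)
          = (‖a‖ / ‖x‖) ^ 2 by field_simp; rw [hnormsq]; ring, Real.sqrt_sq (by positivity)]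
  refine le_antisymm (csInf_le ⟨‖a‖ / ‖x‖, ?_⟩ mem) (le_csInf ⟨_, mem⟩ ?_)
  · rintro r ⟨y, h1, h2, rfl⟩
    exact key y h1 h2
  · rintro r ⟨y, h1, h2, rfl⟩
    exact key y h1 h2

theorem stmt0 [FiniteDimensional ℝ V] (hdim : 2 ≤ Module.finrank ℝ V)
    (W : Submodule ℝ V) (hW0 : W ≠ ⊥) (hWt : W ≠ ⊤)
    (x y : V) (hx : x ≠ 0) (hy : y ≠ 0) (hxW : x ∉ Wᗮ) (hyW : y ∉ Wᗮ) :
    projDist ((W.orthogonalProjectionOnto x : V)) ((W.orthogonalProjectionOnto y : V)) ≤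
      (projDistToSub x Wᗮ)⁻¹ * (projDistToSub y Wᗮ)⁻¹ * projDist x y := by
  set a : V := (W.orthogonalProjectionOnto x : V) with ha
  set b : V := (W.orthogonalProjectionOnto y : V) with hb
  have haW : a ∈ W := (W.orthogonalProjectionOnto x).2
  have hbW : b ∈ W := (W.orthogonalProjectionOnto y).2
  have ha0 : a ≠ 0 := by
    intro h
    exact hxW (Submodule.orthogonalProjectionOnto_eq_zero_iff.mp (Submodule.coe_eq_zero.mp h))
  have hb0 : b ≠ 0 := by
    intro h
    exact hyW (Submodule.orthogonalProjectionOnto_eq_zero_iff.mp (Submodule.coe_eq_zero.mp h))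
  have hx' : (0:ℝ) < ‖x‖ := norm_pos_iff.mpr hx
  have hy' : (0:ℝ) < ‖y‖ := norm_pos_iff.mpr hy
  have ha' : (0:ℝ) < ‖a‖ := norm_pos_iff.mpr ha0
  have hb' : (0:ℝ) < ‖b‖ := norm_pos_iff.mpr hb0
  rw [projDistToSub_eq W hWt x hx, projDistToSub_eq W hWt y hy,
    projDist_eq x y hx hy, projDist_eq a b ha0 hb0, ← ha, ← hb]
  have hrhs : (‖a‖ / ‖x‖)⁻¹ * (‖b‖ / ‖y‖)⁻¹ * (wedgeNorm x y / (‖x‖ * ‖y‖))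
      = wedgeNorm x y / (‖a‖ * ‖b‖) := by
    field_simp
  rw [hrhs]
  have hw : wedgeNorm a b ≤ wedgeNorm x y := by
    have h1 : ⟪a, y - b⟫ = 0 :=
      Submodule.inner_right_of_mem_orthogonal haW (Submodule.sub_starProjection_mem_orthogonal (K := W) y)
    have h2 : ⟪x - a, b⟫ = 0 :=
      Submodule.inner_left_of_mem_orthogonal hbW (Submodule.sub_starProjection_mem_orthogonal (K := W) x)
    have h3 : ⟪a, x - a⟫ = 0 :=
      Submodule.inner_right_of_mem_orthogonal haW (Submodule.sub_starProjection_mem_orthogonal (K := W) x)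
    have h4 : ⟪b, y - b⟫ = 0 :=
      Submodule.inner_right_of_mem_orthogonal hbW (Submodule.sub_starProjection_mem_orthogonal (K := W) y)
    have := wedge_mono a (x - a) b (y - b) h1 h2 h3 h4
    simpa using this
  gcongr
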